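/- Let k be a natural number and let U, U' be nonzero real numbers such that all intermediate denominators below are nonzero. Then U = (29k^3 + 138k^2 + 216k + 112)/(6(k+1)) - (k+2)^5/(6(k+1)((5k^2+20k+20) + 6U')) holds if and only if U = (2k+3)(2k+4) + (k+2)^3/((k+1) + (k+1)/(4 + 1/(1 + (k+2)^2/U'))). -/

import Mathlib

theorem U_cf_equiv (k : ℕ) (U U' : ℝ) (hU : U ≠ 0) (hU' : U' ≠ 0)
    (h1 : (5 * (k : ℝ) ^ 2 + 20 * (k : ℝ) + 20) + 6 * U' ≠ 0)
    (h2 : 1 + ((k : ℝ) + 2) ^ 2 / U' ≠ 0)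
    (h3 : 4 + 1 / (1 + ((k : ℝ) + 2) ^ 2 / U') ≠ 0)
    (h4 : ((k : ℝ) + 1) + ((k : ℝ) + 1) / (4 + 1 / (1 + ((k : ℝ) + 2) ^ 2 / U')) ≠ 0) :
    U = (29 * (k : ℝ) ^ 3 + 138 * (k : ℝ) ^ 2 + 216 * (k : ℝ) + 112) / (6 * ((k : ℝ) + 1)) -
        ((k : ℝ) + 2) ^ 5 /
          (6 * ((k : ℝ) + 1) * ((5 * (k : ℝ) ^ 2 + 20 * (k : ℝ) + 20) + 6 * U')) ↔
      U = (2 * (k : ℝ) + 3) * (2 * (k : ℝ) + 4) +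
        ((k : ℝ) + 2) ^ 3 /
          (((k : ℝ) + 1) + ((k : ℝ) + 1) /
            (4 + 1 / (1 + ((k : ℝ) + 2) ^ 2 / U'))) := by
  have hk1 : (k : ℝ) + 1 ≠ 0 := by positivity
  set A : ℝ := U' + ((k : ℝ) + 2) ^ 2 with hAdef
  have e1 : 1 + ((k : ℝ) + 2) ^ 2 / U' = A / U' := by field_simp; exact hAdef.symm
  have hA : A ≠ 0 := by
    rw [e1] at h2
    exact fun h => h2 (by rw [h, zero_div])
  have e2 : 1 / (1 + ((k : ℝ) + 2) ^ 2 / U') = U' / A := by rw [e1, one_div_div]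
  have e3 : (4 : ℝ) + U' / A = (4 * A + U') / A := by field_simp
  have hB : 4 * A + U' ≠ 0 := by
    rw [e2, e3] at h3
    exact fun h => h3 (by rw [h, zero_div])
  have e4 : ((k : ℝ) + 1) + ((k : ℝ) + 1) / ((4 * A + U') / A)
      = ((k : ℝ) + 1) * (5 * A + U') / (4 * A + U') := by
    rw [div_div_eq_mul_div]
    field_simp
    linear_combination (-1 : ℝ) * mul_inv_cancel₀ (show A * 4 + U' ≠ 0 by rw [mul_comm]; exact hB)
  have e5 : 5 * A + U' = (5 * (k : ℝ) ^ 2 + 20 * (k : ℝ) + 20) + 6 * U' := by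
    rw [hAdef]; ring
  have key : (29 * (k : ℝ) ^ 3 + 138 * (k : ℝ) ^ 2 + 216 * (k : ℝ) + 112) / (6 * ((k : ℝ) + 1)) -
        ((k : ℝ) + 2) ^ 5 /
          (6 * ((k : ℝ) + 1) * ((5 * (k : ℝ) ^ 2 + 20 * (k : ℝ) + 20) + 6 * U')) =
      (2 * (k : ℝ) + 3) * (2 * (k : ℝ) + 4) +
        ((k : ℝ) + 2) ^ 3 /
          (((k : ℝ) + 1) + ((k : ℝ) + 1) /
            (4 + 1 / (1 + ((k : ℝ) + 2) ^ 2 / U'))) := by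
    rw [e2, e3, e4, div_div_eq_mul_div, ← e5]
    have h5 : 5 * A + U' ≠ 0 := by rw [e5]; exact h1
    field_simp
    ring
  rw [key]
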